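/- Let P = ℂ[[x₁,…,xₙ]] and let σ be a diagonal derivation of P with integer eigenvalues, i.e. σ(xⱼ) = cⱼ·xⱼ with cⱼ ∈ ℤ for all j. If 0 ≠ f ∈ P satisfies σ(f) ∈ (f), then the principal ideal (f) has a σ-equivariant generator: there exist a unit u ∈ P and an integer λ such that σ(u·f) = λ·(u·f). -/

import Mathlib

noncomputable section
set_option synthInstance.maxHeartbeats 1000000
set_option maxHeartbeats 1000000

open MvPowerSeries Finset

namespace EquivGenAux

variable {n : ℕ}

/-- weight of a monomial -/
def wt (c : Fin n → ℤ) (d : Fin n →₀ ℕ) : ℂ := ∑ j, (c j : ℂ) * (d j : ℂ)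

/-- integer weight -/
def wtZ (c : Fin n → ℤ) (d : Fin n →₀ ℕ) : ℤ := ∑ j, c j * (d j : ℤ)

lemma wtZ_cast (c : Fin n → ℤ) (d : Fin n →₀ ℕ) : ((wtZ c d : ℤ) : ℂ) = wt c d := by
  unfold wt wtZ
  push_cast
  rfl

lemma wt_add (c : Fin n → ℤ) (a b : Fin n →₀ ℕ) : wt c (a + b) = wt c a + wt c b := by
  unfold wt
  rw [← Finset.sum_add_distrib]
  apply Finset.sum_congr rfl
  intro j _
  rw [Finsupp.add_apply]
  push_cast
  ring

def Gser (c : Fin n → ℤ) (g : MvPowerSeries (Fin n) ℂ) (j : ℕ) : MvPowerSeries (Fin n) ℂ :=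
  fun e => MvPowerSeries.coeff e g * wt c e ^ j / (j.factorial : ℂ)

def Fser (c : Fin n → ℤ) (f : MvPowerSeries (Fin n) ℂ) (k : ℕ) : MvPowerSeries (Fin n) ℂ :=
  fun d => MvPowerSeries.coeff d f * wt c d ^ k / (k.factorial : ℂ)

lemma coeff_Gser (c : Fin n → ℤ) (g : MvPowerSeries (Fin n) ℂ) (j : ℕ) (e : Fin n →₀ ℕ) :
    MvPowerSeries.coeff e (Gser c g j) = MvPowerSeries.coeff e g * wt c e ^ j / (j.factorial : ℂ) := rfl

lemma coeff_Fser (c : Fin n → ℤ) (f : MvPowerSeries (Fin n) ℂ) (k : ℕ) (d : Fin n →₀ ℕ) :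
    MvPowerSeries.coeff d (Fser c f k) = MvPowerSeries.coeff d f * wt c d ^ k / (k.factorial : ℂ) := rfl

def Wser (c : Fin n → ℤ) (g : MvPowerSeries (Fin n) ℂ) : ℕ → MvPowerSeries (Fin n) ℂ
  | 0 => 1
  | (k+1) => (((k+1 : ℕ) : ℂ))⁻¹ • ∑ j ∈ Finset.range (k+1), Gser c g j * Wser c g (k - j)

lemma binom (a b : ℂ) (k : ℕ) :
    ∑ j ∈ Finset.range (k+1), a ^ j / (j.factorial : ℂ) * (b ^ (k-j) / ((k-j).factorial : ℂ))
      = (a + b) ^ k / (k.factorial : ℂ) := by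
  rw [add_pow, Finset.sum_div]
  apply Finset.sum_congr rfl
  intro j hj
  have hjk : j ≤ k := Nat.lt_succ_iff.mp (Finset.mem_range.mp hj)
  rw [Nat.cast_choose ℂ hjk]
  have h1 : (j.factorial : ℂ) ≠ 0 := Nat.cast_ne_zero.mpr (Nat.factorial_ne_zero _)
  have h2 : (((k-j).factorial : ℕ) : ℂ) ≠ 0 := Nat.cast_ne_zero.mpr (Nat.factorial_ne_zero _)
  have h3 : (k.factorial : ℂ) ≠ 0 := Nat.cast_ne_zero.mpr (Nat.factorial_ne_zero _)
  field_simp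

variable {c : Fin n → ℤ} {g f : MvPowerSeries (Fin n) ℂ}

lemma sum_Gser_Fser (hgf : ∀ d, MvPowerSeries.coeff d (g * f) = wt c d * MvPowerSeries.coeff d f)
    (k : ℕ) :
    ∑ j ∈ Finset.range (k+1), Gser c g j * Fser c f (k-j) = (((k+1:ℕ)) : ℂ) • Fser c f (k+1) := by
  apply MvPowerSeries.ext
  intro d
  rw [map_sum, map_smul]
  have lhs : ∀ j ∈ Finset.range (k+1),
      MvPowerSeries.coeff d (Gser c g j * Fser c f (k-j)) =
      ∑ p ∈ Finset.HasAntidiagonal.antidiagonal d,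
        (MvPowerSeries.coeff p.1 g * MvPowerSeries.coeff p.2 f) *
          (wt c p.1 ^ j / (j.factorial : ℂ) * (wt c p.2 ^ (k-j) / (((k-j).factorial : ℕ) : ℂ))) := by
    intro j _
    rw [MvPowerSeries.coeff_mul]
    apply Finset.sum_congr rfl
    intro p _
    rw [coeff_Gser, coeff_Fser]
    ring
  rw [Finset.sum_congr rfl lhs, Finset.sum_comm]
  have inner : ∀ p ∈ Finset.HasAntidiagonal.antidiagonal d,
      ∑ j ∈ Finset.range (k+1),
        (MvPowerSeries.coeff p.1 g * MvPowerSeries.coeff p.2 f) *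
          (wt c p.1 ^ j / (j.factorial : ℂ) * (wt c p.2 ^ (k-j) / (((k-j).factorial : ℕ) : ℂ)))
      = (MvPowerSeries.coeff p.1 g * MvPowerSeries.coeff p.2 f) * (wt c d ^ k / (k.factorial : ℂ)) := by
    intro p hp
    rw [← Finset.mul_sum, binom, ← wt_add, Finset.HasAntidiagonal.mem_antidiagonal.mp hp]
  rw [Finset.sum_congr rfl inner, ← Finset.sum_mul, ← MvPowerSeries.coeff_mul, hgf, coeff_Fser]
  have h3 : (k.factorial : ℂ) ≠ 0 := Nat.cast_ne_zero.mpr (Nat.factorial_ne_zero _)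
  have h4 : ((k+1 : ℕ) : ℂ) ≠ 0 := Nat.cast_ne_zero.mpr (Nat.succ_ne_zero k)
  rw [Nat.factorial_succ, Nat.cast_mul, smul_eq_mul, ← mul_div_assoc, ← mul_div_assoc,
    mul_div_mul_left _ _ h4]
  ring

lemma key (hgf : ∀ d, MvPowerSeries.coeff d (g * f) = wt c d * MvPowerSeries.coeff d f) :
    ∀ k, Wser c g k * f = Fser c f k := by
  intro k
  induction k using Nat.strong_induction_on with
  | _ k ih =>
    cases k with
    | zero =>
      show Wser c g 0 * f = Fser c f 0
      rw [Wser, one_mul]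
      apply MvPowerSeries.ext
      intro d
      rw [coeff_Fser]
      simp
    | succ k =>
      rw [Wser, smul_mul_assoc, Finset.sum_mul]
      have : ∀ j ∈ Finset.range (k+1),
          Gser c g j * Wser c g (k-j) * f = Gser c g j * Fser c f (k-j) := by
        intro j _
        rw [mul_assoc, ih (k-j) (by omega)]
      rw [Finset.sum_congr rfl this, sum_Gser_Fser hgf, smul_smul,
        inv_mul_cancel₀ (Nat.cast_ne_zero.mpr (Nat.succ_ne_zero k)), one_smul]

/-- formal exponential e^{m s} -/
def Em (m : ℤ) : PowerSeries ℂ := PowerSeries.mk fun k => (m : ℂ) ^ k / (k.factorial : ℂ)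

lemma li_Em : LinearIndependent ℂ Em := by
  rw [linearIndependent_iff']
  intro s a hsum i hi
  have hpow : ∀ k : ℕ, ∑ m ∈ s, a m * (m : ℂ) ^ k = 0 := by
    intro k
    have h := congrArg (PowerSeries.coeff k) hsum
    rw [map_sum, map_zero] at h
    have h' : ∑ m ∈ s, a m * ((m:ℂ)^k / (k.factorial : ℂ)) = 0 := by
      simpa [Em, PowerSeries.coeff_smul, PowerSeries.coeff_mk, smul_eq_mul] using h
    have h3 : (k.factorial : ℂ) ≠ 0 := Nat.cast_ne_zero.mpr (Nat.factorial_ne_zero _)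
    have := congrArg (fun z => z * (k.factorial : ℂ)) h'
    simp only [Finset.sum_mul, zero_mul] at this
    rw [← this]
    apply Finset.sum_congr rfl
    intro m _
    field_simp
  have hpoly : ∀ Q : Polynomial ℂ, ∑ m ∈ s, a m * Q.eval (m : ℂ) = 0 := by
    intro Q
    calc ∑ m ∈ s, a m * Q.eval (m : ℂ)
        = ∑ m ∈ s, ∑ k ∈ Finset.range (Q.natDegree + 1), Q.coeff k * (a m * (m:ℂ)^k) := by
          apply Finset.sum_congr rfl
          intro m _
          rw [Polynomial.eval_eq_sum_range, Finset.mul_sum]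
          apply Finset.sum_congr rfl
          intro k _
          ring
      _ = ∑ k ∈ Finset.range (Q.natDegree + 1), Q.coeff k * ∑ m ∈ s, a m * (m:ℂ)^k := by
          rw [Finset.sum_comm]
          apply Finset.sum_congr rfl
          intro k _
          rw [Finset.mul_sum]
      _ = 0 := by
          apply Finset.sum_eq_zero
          intro k _
          rw [hpow k, mul_zero]
  set Q : Polynomial ℂ := ∏ m' ∈ s.erase i, (Polynomial.X - Polynomial.C (m' : ℂ)) with hQ
  have h1 : ∑ m ∈ s, a m * Q.eval (m : ℂ) = a i * Q.eval (i : ℂ) := by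
    apply Finset.sum_eq_single_of_mem i hi
    intro m hm hmi
    have : Q.eval (m : ℂ) = 0 := by
      rw [hQ, Polynomial.eval_prod]
      apply Finset.prod_eq_zero (Finset.mem_erase.mpr ⟨hmi, hm⟩)
      simp
    rw [this, mul_zero]
  have h2 : Q.eval (i : ℂ) ≠ 0 := by
    rw [hQ, Polynomial.eval_prod]
    apply Finset.prod_ne_zero_iff.mpr
    intro m' hm'
    have hne : m' ≠ i := (Finset.mem_erase.mp hm').1
    simp only [Polynomial.eval_sub, Polynomial.eval_X, Polynomial.eval_C]
    intro hz
    apply hne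
    have : (m' : ℂ) = (i : ℂ) := by linear_combination -hz
    exact_mod_cast this
  have := hpoly Q
  rw [h1] at this
  exact (mul_eq_zero.mp this).resolve_right h2

lemma exists_L (lam : ℤ) : ∃ L : PowerSeries ℂ →ₗ[ℂ] ℂ,
    ∀ m : ℤ, L (Em m) = if m = lam then 1 else 0 := by
  classical
  have li := li_Em
  have li2 : LinearIndepOn ℂ id (Set.range Em) :=
    (linearIndepOn_id_range_iff (LinearIndependent.injective li)).mpr li
  let b := Module.Basis.extend li2
  have hmem : Em lam ∈ li2.extend (Set.subset_univ _) :=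
    Module.Basis.subset_extend li2 ⟨lam, rfl⟩
  refine ⟨b.coord ⟨Em lam, hmem⟩, ?_⟩
  intro m
  have hm : Em m ∈ li2.extend (Set.subset_univ _) := Module.Basis.subset_extend li2 ⟨m, rfl⟩
  have hb : b ⟨Em m, hm⟩ = Em m := Module.Basis.extend_apply_self li2 ⟨Em m, hm⟩
  rw [← hb, Module.Basis.coord_apply, Module.Basis.repr_self, Finsupp.single_apply]
  by_cases h : m = lam
  · subst h; rw [if_pos rfl, if_pos rfl]
  · rw [if_neg h, if_neg]
    intro hcontra
    apply h
    apply LinearIndependent.injective li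
    simpa using congrArg Subtype.val hcontra

end EquivGenAux

open EquivGenAux

/-- Let `σ` be the diagonal derivation of `P = ℂ[[x₁,…,xₙ]]` with integer eigenvalues,
`σ(xⱼ) = cⱼ·xⱼ` with `cⱼ ∈ ℤ` (so `σ` multiplies the coefficient of `x^d` by `Σⱼ cⱼ·dⱼ`).
If `0 ≠ f ∈ P` satisfies `σ(f) ∈ (f)`, then `(f)` has a `σ`-equivariant generator:
there exist a unit `u ∈ P` and `λ ∈ ℤ` with `σ(u·f) = λ·(u·f)`. -/
theorem equivariant_generator {n : ℕ} (hn : 0 < n) (c : Fin n → ℤ)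
    (σ : Derivation ℂ (MvPowerSeries (Fin n) ℂ) (MvPowerSeries (Fin n) ℂ))
    (hσ : ∀ (g : MvPowerSeries (Fin n) ℂ) (d : Fin n →₀ ℕ),
      MvPowerSeries.coeff d (σ g) = (∑ j, (c j : ℂ) * (d j : ℂ)) * MvPowerSeries.coeff d g)
    (f : MvPowerSeries (Fin n) ℂ) (hf0 : f ≠ 0)
    (hlog : σ f ∈ Ideal.span {f}) :
    ∃ (u : (MvPowerSeries (Fin n) ℂ)ˣ) (lam : ℤ),
      σ ((u : MvPowerSeries (Fin n) ℂ) * f) =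
        (lam : ℂ) • ((u : MvPowerSeries (Fin n) ℂ) * f) := by
  classical
  -- extract g with σ f = g * f
  obtain ⟨g', hg'⟩ := Ideal.mem_span_singleton.mp hlog
  set g : MvPowerSeries (Fin n) ℂ := g' with hgdef
  have hg : σ f = g * f := by rw [hg', mul_comm]
  have hgf : ∀ d, MvPowerSeries.coeff d (g * f) = wt c d * MvPowerSeries.coeff d f := by
    intro d
    rw [← hg]
    exact hσ f d
  -- minimal degree monomial of f
  have hex : ∃ d, MvPowerSeries.coeff d f ≠ 0 := by
    by_contra h
    push_neg at h
    apply hf0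
    apply MvPowerSeries.ext
    intro d
    rw [h d, map_zero]
  set deg : (Fin n →₀ ℕ) → ℕ := fun d => ∑ j, d j with hdeg
  have hexk : ∃ k : ℕ, ∃ d, deg d = k ∧ MvPowerSeries.coeff d f ≠ 0 := by
    obtain ⟨d, hd⟩ := hex
    exact ⟨deg d, d, rfl, hd⟩
  obtain ⟨d₀, hd₀deg, hd₀⟩ := Nat.find_spec hexk
  have hmin : ∀ d, MvPowerSeries.coeff d f ≠ 0 → Nat.find hexk ≤ deg d := by
    intro d hd
    exact Nat.find_le ⟨d, rfl, hd⟩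
  -- the eigenvalue
  set lam : ℤ := wtZ c d₀ with hlam
  -- vanishing of small coefficients
  have hvanish : ∀ d : Fin n →₀ ℕ, d ≤ d₀ → d ≠ d₀ → MvPowerSeries.coeff d f = 0 := by
    intro d hle hne
    by_contra hd
    have h1 : deg d < deg d₀ := by
      apply Finset.sum_lt_sum
      · intro j _
        exact (Finsupp.le_def.mp hle) j
      · by_contra hc
        push_neg at hc
        apply hne
        apply Finsupp.ext
        intro j
        exact le_antisymm ((Finsupp.le_def.mp hle) j) (hc j (Finset.mem_univ j))
    have := hmin d hd
    omega
  -- constant coefficient of Wser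
  have hW0 : ∀ k, MvPowerSeries.coeff 0 (Wser c g k) = ((lam : ℤ) : ℂ) ^ k / (k.factorial : ℂ) := by
    intro k
    have hk := congrArg (MvPowerSeries.coeff d₀) (key hgf k)
    rw [MvPowerSeries.coeff_mul, coeff_Fser] at hk
    have hsingle : ∑ p ∈ Finset.HasAntidiagonal.antidiagonal d₀,
        MvPowerSeries.coeff p.1 (Wser c g k) * MvPowerSeries.coeff p.2 f
        = MvPowerSeries.coeff 0 (Wser c g k) * MvPowerSeries.coeff d₀ f := by
      apply Finset.sum_eq_single_of_mem (0, d₀)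
      · rw [Finset.HasAntidiagonal.mem_antidiagonal, zero_add]
      · intro p hp hne
        have hsum := Finset.HasAntidiagonal.mem_antidiagonal.mp hp
        by_cases h2 : p.2 = d₀
        · exfalso
          apply hne
          have : p.1 = 0 := by
            have h := hsum
            rw [h2] at h
            exact add_eq_right.mp h
          exact Prod.ext this h2
        · have hle : p.2 ≤ d₀ := by
            rw [Finsupp.le_def]
            intro j
            have : p.1 j + p.2 j = d₀ j := by
              rw [← Finsupp.add_apply, hsum]
            omega
          rw [hvanish p.2 hle h2, mul_zero]
    rw [hsingle] at hk
    have : ((lam : ℤ) : ℂ) = wt c d₀ := wtZ_cast c d₀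
    rw [this]
    field_simp at hk ⊢
    linear_combination hk
  -- the linear functional
  obtain ⟨L, hL⟩ := exists_L lam
  -- the unit
  set u : MvPowerSeries (Fin n) ℂ :=
    (fun e => L (PowerSeries.mk fun k => MvPowerSeries.coeff e (Wser c g k))) with hu
  have hucoeff : ∀ e, MvPowerSeries.coeff e u
      = L (PowerSeries.mk fun k => MvPowerSeries.coeff e (Wser c g k)) := fun e => rfl
  -- the main computation
  have huf : ∀ d, MvPowerSeries.coeff d (u * f)
      = if wtZ c d = lam then MvPowerSeries.coeff d f else 0 := by
    intro d
    rw [MvPowerSeries.coeff_mul]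
    have step : ∀ p ∈ Finset.HasAntidiagonal.antidiagonal d,
        MvPowerSeries.coeff p.1 u * MvPowerSeries.coeff p.2 f
        = L (MvPowerSeries.coeff p.2 f •
            (PowerSeries.mk fun k => MvPowerSeries.coeff p.1 (Wser c g k))) := by
      intro p _
      rw [map_smul, hucoeff, smul_eq_mul, mul_comm]
    rw [Finset.sum_congr rfl step, ← map_sum]
    have hser : (∑ p ∈ Finset.HasAntidiagonal.antidiagonal d, MvPowerSeries.coeff p.2 f •
        (PowerSeries.mk fun k => MvPowerSeries.coeff p.1 (Wser c g k)))
        = MvPowerSeries.coeff d f • Em (wtZ c d) := by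
      apply PowerSeries.ext
      intro k
      rw [map_sum, PowerSeries.coeff_smul]
      have hk := congrArg (MvPowerSeries.coeff d) (key hgf k)
      rw [MvPowerSeries.coeff_mul, coeff_Fser] at hk
      calc ∑ p ∈ Finset.HasAntidiagonal.antidiagonal d, (PowerSeries.coeff k)
            (MvPowerSeries.coeff p.2 f • PowerSeries.mk fun k => MvPowerSeries.coeff p.1 (Wser c g k))
          = ∑ p ∈ Finset.HasAntidiagonal.antidiagonal d,
              MvPowerSeries.coeff p.1 (Wser c g k) * MvPowerSeries.coeff p.2 f := by
            apply Finset.sum_congr rfl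
            intro p _
            rw [PowerSeries.coeff_smul, PowerSeries.coeff_mk, smul_eq_mul]
            ring
        _ = MvPowerSeries.coeff d f * wt c d ^ k / (k.factorial : ℂ) := hk
        _ = MvPowerSeries.coeff d f • (PowerSeries.coeff k) (Em (wtZ c d)) := by
            rw [smul_eq_mul, Em, PowerSeries.coeff_mk, wtZ_cast]
            ring
    rw [hser, map_smul, hL, smul_eq_mul]
    by_cases h : wtZ c d = lam
    · rw [if_pos h, if_pos h, mul_one]
    · rw [if_neg h, if_neg h, mul_zero]
  -- u is a unit
  have hu1 : MvPowerSeries.constantCoeff u = 1 := by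
    have : MvPowerSeries.constantCoeff u = MvPowerSeries.coeff 0 u := by
      rw [MvPowerSeries.coeff_zero_eq_constantCoeff]
    rw [this, hucoeff]
    have : (PowerSeries.mk fun k => MvPowerSeries.coeff 0 (Wser c g k)) = Em lam := by
      apply PowerSeries.ext
      intro k
      rw [PowerSeries.coeff_mk, Em, PowerSeries.coeff_mk, hW0]
    rw [this, hL, if_pos rfl]
  have hmul : u * MvPowerSeries.invOfUnit u 1 = 1 :=
    MvPowerSeries.mul_invOfUnit u 1 (by rw [hu1]; rfl)
  refine ⟨Units.mkOfMulEqOne u (MvPowerSeries.invOfUnit u 1) hmul, lam, ?_⟩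
  have hval : ((Units.mkOfMulEqOne u (MvPowerSeries.invOfUnit u 1) hmul : (MvPowerSeries (Fin n) ℂ)ˣ) :
      MvPowerSeries (Fin n) ℂ) = u := rfl
  rw [hval]
  apply MvPowerSeries.ext
  intro d
  rw [hσ, map_smul, smul_eq_mul, huf]
  by_cases h : wtZ c d = lam
  · rw [if_pos h]
    have : (∑ j, (c j : ℂ) * (d j : ℂ)) = ((lam : ℤ) : ℂ) := by
      rw [← h, wtZ_cast]
      rfl
    rw [this]
  · rw [if_neg h, mul_zero, mul_zero]
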